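/- Let A be a finite-dimensional Frobenius algebra over a field K which is a symmetric algebra, i.e. the form η(a ⊗ b) = λ_L(1_A)(a b) satisfies η(a ⊗ b) = η(b ⊗ a). Let D be the left A^e-submodule of A ⊗ A generated by T(δ(1_A)), where A^e = A ⊗ A^op acts by (a ⊗ b)·(u ⊗ v) = (a u) ⊗ (v b) and T is the flip. Then D equals the image δ(A) of δ as left A^e-submodules of A ⊗ A. -/
import Mathlib


open TensorProduct

/-- Let `A` be a Frobenius algebra which is a symmetric algebra
(`η(a ⊗ b) = η(b ⊗ a)` for `η(a ⊗ b) = λ_L(1)(a b)`). Then the left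
`A^e`-submodule `D` of `A ⊗ A` generated by `T(δ(1))` — i.e. the span of the orbit
of `T(δ(1))` under the action `(a ⊗ b) · (u ⊗ v) = (a u) ⊗ (v b)` — equals the
image `δ(A)` of `δ`. -/
theorem symmetric_algebra_D_eq_image_delta
    {K : Type*} [Field K] {A : Type*} [Ring A] [Algebra K A] [FiniteDimensional K A]
    (lL : A ≃ₗ[K] Module.Dual K A)
    (hlL : ∀ a x b : A, lL (a * x) b = lL x (b * a))
    (δ : A →ₗ[K] A ⊗[K] A) (ε : A →ₗ[K] K)
    (hcoassoc : ∀ a : A,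
      (TensorProduct.assoc K A A A)
          ((TensorProduct.map δ (LinearMap.id : A →ₗ[K] A)) (δ a)) =
        (TensorProduct.map (LinearMap.id : A →ₗ[K] A) δ) (δ a))
    (hcounit_l : ∀ a : A,
      (TensorProduct.lid K A)
          ((TensorProduct.map ε (LinearMap.id : A →ₗ[K] A)) (δ a)) = a)
    (hcounit_r : ∀ a : A,
      (TensorProduct.rid K A)
          ((TensorProduct.map (LinearMap.id : A →ₗ[K] A) ε) (δ a)) = a)
    (hbimod : ∀ a x b : A,
      δ (a * x * b) =
        (TensorProduct.map (LinearMap.mulLeft K a) (LinearMap.mulRight K b)) (δ x))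
    (hεlL : ∀ a : A, ε a = lL 1 a)
    (hsymm : ∀ a b : A, lL 1 (a * b) = lL 1 (b * a)) :
    Submodule.span K
        {y : A ⊗[K] A | ∃ a b : A,
          y = (TensorProduct.map (LinearMap.mulLeft K a) (LinearMap.mulRight K b))
                ((TensorProduct.comm K A A) (δ 1))} =
      LinearMap.range δ := by
  classical
  -- the map Φ : A ⊗ A → Hom(A, A),  u ⊗ v ↦ (x ↦ lL u x • v)
  set Φ : A ⊗[K] A →ₗ[K] (A →ₗ[K] A) :=
    (dualTensorHom K A A).comp (TensorProduct.map lL.toLinearMap LinearMap.id) with hΦdef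
  have hmapeq : (TensorProduct.congr lL (LinearEquiv.refl K A)).toLinearMap
      = TensorProduct.map lL.toLinearMap LinearMap.id := by
    ext u v; rfl
  have hinj : Function.Injective Φ := by
    rw [hΦdef, LinearMap.coe_comp]
    refine Function.Injective.comp ?_ ?_
    · have h := (dualTensorHomEquivOfBasis (N := A)
        (Module.Free.chooseBasis K A)).injective
      have he : ⇑(dualTensorHomEquivOfBasis (N := A) (Module.Free.chooseBasis K A))
          = ⇑(dualTensorHom K A A) :=
        funext fun x => dualTensorHomEquivOfBasis_apply (Module.Free.chooseBasis K A) x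
      rwa [he] at h
    · rw [← hmapeq]
      exact (TensorProduct.congr lL (LinearEquiv.refl K A)).injective
  -- δ x in terms of δ 1
  have hδl : ∀ x : A, (TensorProduct.map (LinearMap.mulLeft K x)
      (LinearMap.id : A →ₗ[K] A)) (δ 1) = δ x := by
    intro x
    have h := hbimod x 1 1
    simpa [LinearMap.mulRight_one] using h.symm
  have hδr : ∀ x : A, (TensorProduct.map (LinearMap.id : A →ₗ[K] A)
      (LinearMap.mulRight K x)) (δ 1) = δ x := by
    intro x
    have h := hbimod 1 1 x
    simpa [LinearMap.mulLeft_one] using h.symm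
  -- evaluation formulas for Φ
  have gen1 : ∀ (t : A ⊗[K] A) (x : A), Φ t x =
      (TensorProduct.lid K A) ((TensorProduct.map ε LinearMap.id)
        ((TensorProduct.map (LinearMap.mulLeft K x) LinearMap.id) t)) := by
    intro t x
    induction t using TensorProduct.induction_on with
    | zero => simp
    | tmul u v =>
        have h1 : lL u x = ε (x * u) := by
          rw [hεlL]
          have := hlL u 1 x
          simpa using this
        simp [Φ, dualTensorHom_apply, h1]
    | add s t hs ht => simp [map_add, hs, ht]
  have gen2 : ∀ (t : A ⊗[K] A) (x : A), Φ ((TensorProduct.comm K A A) t) x =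
      (TensorProduct.rid K A) ((TensorProduct.map LinearMap.id ε)
        ((TensorProduct.map LinearMap.id (LinearMap.mulRight K x)) t)) := by
    intro t x
    induction t using TensorProduct.induction_on with
    | zero => simp
    | tmul u v =>
        have h1 : lL v x = ε (v * x) := by
          rw [hεlL]
          have h2 := hlL v 1 x
          simp only [mul_one] at h2
          rw [h2, hsymm]
        simp [Φ, dualTensorHom_apply, h1]
    | add s t hs ht => simp [map_add, hs, ht]
  -- the Casimir element is symmetric
  have hT : (TensorProduct.comm K A A) (δ 1) = δ 1 := by
    apply hinj
    apply LinearMap.ext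
    intro x
    rw [gen2, gen1, hδl, hδr, hcounit_l, hcounit_r]
  -- conclude
  apply le_antisymm
  · rw [Submodule.span_le]
    rintro y ⟨a, b, rfl⟩
    rw [hT]
    refine ⟨a * b, ?_⟩
    have h := hbimod a 1 b
    simpa using h
  · rintro y ⟨x, rfl⟩
    apply Submodule.subset_span
    refine ⟨x, 1, ?_⟩
    rw [hT]
    have h := hbimod x 1 1
    simpa using h
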